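/- arXiv:0909.0141 — 2 statements merged into one kernel-verified Lean document; each statement's English description precedes it below -/
import Mathlib

section
/- Let n ≥ 4 and let T be a d-equidistant ultrametric n-tree all of whose edge weights are nonnegative integers, with total weight D. For each j ∈ {1,…,n−2} and edge e of T let a_j(e) ∈ ℂ be arbitrary complex numbers, set x_i^{(j)} = Σ_e a_j(e)·t^{−h(e)} ∈ ℂ((t)) (sum over edges e on the path from the root to leaf i), and let M be the n×n matrix over ℂ((t)) whose rows are (1,…,1), (x_i^{(1)})_i, ((x_i^{(1)})²)_i, (x_i^{(2)})_i, …, (x_i^{(n−2)})_i. Then either det(M) = 0 or the t-adic valuation of det(M) is at least −D. -/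
open SimpleGraph

/-- A `d`-equidistant ultrametric `n`-tree with nonnegative integer edge weights:
a rooted binary tree whose `n` leaves are labeled by `Fin n`, with a nonnegative
integer weight on each edge, such that the path from the root to every leaf has
total weight `d`, and the path between any two distinct leaves has positive total
weight. -/
structure UltraTree (n : ℕ) where
  V : Type
  [fintypeV : Fintype V]
  [decEqV : DecidableEq V]
  G : SimpleGraph V
  [decAdj : DecidableRel G.Adj]
  isTree : G.IsTree
  root : V
  root_deg : G.degree root = 2
  deg_of_ne_root : ∀ v : V, v ≠ root → G.degree v = 3 ∨ G.degree v = 1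
  leaf : Fin n → V
  leaf_inj : Function.Injective leaf
  leaf_deg : ∀ i : Fin n, G.degree (leaf i) = 1
  leaf_surj : ∀ v : V, G.degree v = 1 → ∃ i : Fin n, leaf i = v
  d : ℤ
  weight : Sym2 V → ℤ
  weight_nonneg : ∀ e ∈ G.edgeSet, 0 ≤ weight e
  equidistant : ∀ i : Fin n, ∀ p : G.Walk root (leaf i), p.IsPath →
    (p.edges.map weight).sum = d
  leafpair_pos : ∀ i j : Fin n, i ≠ j →
    ∀ p : G.Walk (leaf i) (leaf j), p.IsPath → 0 < (p.edges.map weight).sum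

attribute [instance] UltraTree.fintypeV UltraTree.decEqV UltraTree.decAdj

/-- The unique path from the root to `v`. -/
noncomputable def rootPath {n : ℕ} (T : UltraTree n) (v : T.V) :
    T.G.Walk T.root v :=
  (T.isTree.existsUnique_path T.root v).exists.choose

/-- `depth T v` is the total weight of the (unique) path from the root to `v`. -/
noncomputable def depth {n : ℕ} (T : UltraTree n) (v : T.V) : ℤ :=
  ((rootPath T v).edges.map T.weight).sum

/-- For an edge `e`, `hEdge T e = d - depth u` where `u` is the endpoint of `e`
nearer the root (since the weights are nonnegative, this is the endpoint of
smaller depth). -/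
noncomputable def hEdge {n : ℕ} (T : UltraTree n) (e : Sym2 T.V) : ℤ :=
  T.d - Sym2.lift ⟨fun u w => min (depth T u) (depth T w),
    fun u w => by simp [min_comm]⟩ e

/-- `xval T a j i` is `x_i^{(j)} = Σ_e a_j(e) t^{-h(e)} ∈ ℂ((t))`, the sum running
over the edges `e` on the path from the root to leaf `i`. -/
noncomputable def xval {n : ℕ} (T : UltraTree n) (a : ℕ → Sym2 T.V → ℂ)
    (j : ℕ) (i : Fin n) : LaurentSeries ℂ :=
  ((rootPath T (T.leaf i)).edges.map
    (fun e => HahnSeries.single (-(hEdge T e)) (a j e))).sum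

/-- The matrix `M` whose rows are `(1,…,1)`, `(x_i^{(1)})_i`, `((x_i^{(1)})²)_i`,
`(x_i^{(2)})_i`, …, `(x_i^{(n-2)})_i`. -/
noncomputable def Mmat {n : ℕ} (T : UltraTree n) (a : ℕ → Sym2 T.V → ℂ) :
    Matrix (Fin n) (Fin n) (LaurentSeries ℂ) :=
  fun r c =>
    if r.val = 0 then 1
    else if r.val = 1 then xval T a 1 c
    else if r.val = 2 then (xval T a 1 c) ^ 2
    else xval T a (r.val - 1) c

namespace UT
open SimpleGraph Walk Finset

variable {n : ℕ} (T : UltraTree n)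

lemma rp_isPath (v : T.V) : (rootPath T v).IsPath :=
  (T.isTree.existsUnique_path T.root v).exists.choose_spec

lemma rp_unique {v : T.V} (p : T.G.Walk T.root v) (hp : p.IsPath) : p = rootPath T v :=
  (T.isTree.existsUnique_path T.root v).unique hp (rp_isPath T v)

/-- `Anc T x y` : `x` lies on the root path of `y` (`x` is an ancestor of `y`). -/
def Anc (x y : T.V) : Prop := x ∈ (rootPath T y).support

lemma rp_take {v x : T.V} (hx : x ∈ (rootPath T v).support) :
    rootPath T x = (rootPath T v).takeUntil x hx :=
  (rp_unique T _ ((rp_isPath T v).takeUntil hx)).symm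

lemma anc_refl (v : T.V) : Anc T v v := Walk.end_mem_support _

lemma anc_root (v : T.V) : Anc T T.root v := Walk.start_mem_support _

lemma anc_trans {x y z : T.V} (h1 : Anc T x y) (h2 : Anc T y z) : Anc T x z := by
  unfold Anc at *
  rw [rp_take T h2] at h1
  exact Walk.support_takeUntil_subset _ _ h1

lemma anc_length {x y : T.V} (h : Anc T x y) (hne : x ≠ y) :
    (rootPath T x).length < (rootPath T y).length := by
  have hs := Walk.take_spec (rootPath T y) h
  have hlen : (rootPath T y).length
      = ((rootPath T y).takeUntil x h).length + ((rootPath T y).dropUntil x h).length := by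
    rw [← Walk.length_append, hs]
  have hd : ((rootPath T y).dropUntil x h).length ≠ 0 := fun h0 =>
    hne (Walk.eq_of_length_eq_zero h0)
  rw [← rp_take T h] at hlen
  omega

lemma anc_antisymm {x y : T.V} (h1 : Anc T x y) (h2 : Anc T y x) : x = y := by
  by_contra hne
  have := anc_length T h1 hne
  have := anc_length T h2 (Ne.symm hne)
  omega

lemma rp_root : rootPath T T.root = Walk.nil := by
  exact (Walk.isPath_iff_eq_nil.mp (rp_isPath T T.root))

/-- if `y` is adjacent to `x` and not an ancestor of `x`, then the root path of `y`
extends that of `x` by one step. -/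
lemma rp_concat {x y : T.V} (h : T.G.Adj x y) (hy : ¬ Anc T y x) :
    rootPath T y = (rootPath T x).concat h := by
  refine (rp_unique T _ ?_).symm
  rw [Walk.isPath_def, Walk.support_concat]
  refine List.Nodup.append ((rp_isPath T x).support_nodup) (List.nodup_singleton y) ?_
  intro a ha hb
  rw [List.mem_singleton] at hb
  subst hb
  exact hy ha

lemma anc_dichotomy {x y : T.V} (h : T.G.Adj x y) : Anc T x y ∨ Anc T y x := by
  by_cases hy : Anc T y x
  · exact Or.inr hy
  · left
    unfold Anc
    rw [rp_concat T h hy, Walk.support_concat]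
    exact List.mem_append_left _ (Walk.end_mem_support _)

/-- uniqueness of the parent: a vertex has at most one neighbour which is its ancestor. -/
lemma parent_unique {z q₁ q₂ : T.V} (h1 : T.G.Adj z q₁) (h2 : T.G.Adj z q₂)
    (ha1 : Anc T q₁ z) (ha2 : Anc T q₂ z) : q₁ = q₂ := by
  have hz1 : ¬ Anc T z q₁ := fun hz => h1.ne' (anc_antisymm T hz ha1).symm
  have hz2 : ¬ Anc T z q₂ := fun hz => h2.ne' (anc_antisymm T hz ha2).symm
  have e1 := rp_concat T h1.symm hz1
  have e2 := rp_concat T h2.symm hz2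
  have : (rootPath T z).edges.getLast? = some s(q₁, z) := by
    rw [e1, Walk.edges_concat, List.concat_eq_append]
    exact List.getLast?_concat
  have h2' : (rootPath T z).edges.getLast? = some s(q₂, z) := by
    rw [e2, Walk.edges_concat, List.concat_eq_append]
    exact List.getLast?_concat
  rw [h2'] at this
  exact (Sym2.congr_left.mp (Option.some_injective _ this)).symm

/-- comparability: any two vertices on a common root path are comparable. -/
lemma anc_comp {v x y : T.V} (hx : x ∈ (rootPath T v).support)
    (hy : y ∈ (rootPath T v).support) : Anc T x y ∨ Anc T y x := by
  classical
  by_cases hxy : x ∈ ((rootPath T v).takeUntil y hy).support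
  · left; unfold Anc; rw [rp_take T hy]; exact hxy
  · right
    -- x is in the support of the second part
    have hsplit := Walk.take_spec (rootPath T v) hy
    have hx' : x ∈ ((rootPath T v).dropUntil y hy).support := by
      have := hsplit ▸ hx
      rw [Walk.support_append] at this
      rcases List.mem_append.mp this with h | h
      · exact absurd h hxy
      · exact List.mem_of_mem_tail h
    -- build the path root → x through y
    set q := (rootPath T v).takeUntil y hy with hq
    set r := (rootPath T v).dropUntil y hy with hr
    have hw : ((q.append (r.takeUntil x hx')).append (r.dropUntil x hx')) = rootPath T v := by
      rw [← Walk.append_assoc, Walk.take_spec, hsplit]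
    have hwp : (q.append (r.takeUntil x hx')).IsPath := by
      have : ((q.append (r.takeUntil x hx')).append (r.dropUntil x hx')).IsPath := by
        rw [hw]; exact rp_isPath T v
      exact this.of_append_left
    have : rootPath T x = q.append (r.takeUntil x hx') := (rp_unique T _ hwp).symm
    unfold Anc
    rw [this, Walk.support_append]
    exact List.mem_append_left _ (Walk.end_mem_support _)
noncomputable instance decAnc (x y : T.V) : Decidable (Anc T x y) := Classical.dec _

lemma root_no_parent {q : T.V} (h : T.G.Adj T.root q) : ¬ Anc T q T.root := by
  intro hq
  unfold Anc at hq
  rw [rp_root] at hq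
  simp only [Walk.support_nil, List.mem_singleton] at hq
  exact h.ne hq.symm

lemma nonroot_parent {z : T.V} (hz : z ≠ T.root) : ∃ p, T.G.Adj z p ∧ Anc T p z := by
  have hnil : ¬ (rootPath T z).Nil := Walk.not_nil_of_ne (Ne.symm hz)
  obtain ⟨u, h, q, hq⟩ := Walk.not_nil_iff.mp hnil
  obtain ⟨x, q', h', hc⟩ := Walk.exists_cons_eq_concat h q
  refine ⟨x, h'.symm, ?_⟩
  unfold Anc
  rw [hq, hc, Walk.support_concat]
  exact List.mem_append_left _ (Walk.end_mem_support _)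

lemma parents_card_le_one (z : T.V) :
    ((T.G.neighborFinset z).filter (fun q => Anc T q z)).card ≤ 1 := by
  refine Finset.card_le_one.mpr (fun a ha b hb => ?_)
  simp only [Finset.mem_filter, SimpleGraph.mem_neighborFinset] at ha hb
  exact parent_unique T ha.1 hb.1 ha.2 hb.2

lemma exists_child {z : T.V} (hdeg : T.G.degree z ≠ 1) :
    ∃ m, T.G.Adj z m ∧ ¬ Anc T m z := by
  have hsplit := Finset.card_filter_add_card_filter_not
    (s := T.G.neighborFinset z) (p := fun q => Anc T q z)
  have hp := parents_card_le_one T z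
  have hdeg' : (T.G.neighborFinset z).card = T.G.degree z := rfl
  have h23 : 2 ≤ T.G.degree z := by
    by_cases hr : z = T.root
    · rw [hr, T.root_deg]
    · rcases T.deg_of_ne_root z hr with h3 | h1
      · omega
      · exact absurd h1 hdeg
  obtain ⟨m, hm⟩ := Finset.card_pos.mp
    (show 0 < ((T.G.neighborFinset z).filter (fun q => ¬ Anc T q z)).card by omega)
  simp only [Finset.mem_filter, SimpleGraph.mem_neighborFinset] at hm
  exact ⟨m, hm.1, hm.2⟩

lemma children_two {z m : T.V} (hm : T.G.Adj z m) (hmz : ¬ Anc T m z) :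
    ∃ m', T.G.Adj z m' ∧ ¬ Anc T m' z ∧ m' ≠ m := by
  have hsplit := Finset.card_filter_add_card_filter_not
    (s := T.G.neighborFinset z) (p := fun q => Anc T q z)
  have hp := parents_card_le_one T z
  have hdeg' : (T.G.neighborFinset z).card = T.G.degree z := rfl
  have hC2 : 2 ≤ ((T.G.neighborFinset z).filter (fun q => ¬ Anc T q z)).card := by
    by_cases hr : z = T.root
    · have h0 : ((T.G.neighborFinset z).filter (fun q => Anc T q z)).card = 0 := by
        refine Finset.card_eq_zero.mpr (Finset.filter_eq_empty_iff.mpr ?_)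
        intro q hq
        simp only [SimpleGraph.mem_neighborFinset] at hq
        exact root_no_parent T (hr ▸ hq) ∘ (by intro h; exact hr ▸ h)
      have h2 : T.G.degree z = 2 := by rw [hr]; exact T.root_deg
      omega
    · obtain ⟨p, hpz, hpanc⟩ := nonroot_parent T hr
      have hdeg3 : T.G.degree z = 3 := by
        rcases T.deg_of_ne_root z hr with h3 | h1
        · exact h3
        · exfalso
          have hpm : p ≠ m := fun h => hmz (h ▸ hpanc)
          have : ({p, m} : Finset T.V) ⊆ T.G.neighborFinset z := by
            intro x hx
            simp only [Finset.mem_insert, Finset.mem_singleton] at hx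
            rcases hx with rfl | rfl
            · exact (SimpleGraph.mem_neighborFinset _ _ _).mpr hpz
            · exact (SimpleGraph.mem_neighborFinset _ _ _).mpr hm
          have := Finset.card_le_card this
          rw [Finset.card_insert_of_notMem (by simpa using hpm), Finset.card_singleton] at this
          omega
      omega
  have hmem : m ∈ (T.G.neighborFinset z).filter (fun q => ¬ Anc T q z) := by
    simp only [Finset.mem_filter, SimpleGraph.mem_neighborFinset]
    exact ⟨hm, hmz⟩
  have : 1 ≤ (((T.G.neighborFinset z).filter (fun q => ¬ Anc T q z)).erase m).card := by
    have := Finset.card_erase_of_mem hmem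
    omega
  obtain ⟨m', hm'⟩ := Finset.card_pos.mp
    (show 0 < (((T.G.neighborFinset z).filter (fun q => ¬ Anc T q z)).erase m).card by omega)
  rw [Finset.mem_erase] at hm'
  obtain ⟨hne, hm'2⟩ := hm'
  simp only [Finset.mem_filter, SimpleGraph.mem_neighborFinset] at hm'2
  exact ⟨m', hm'2.1, hm'2.2, hne⟩

lemma exists_leaf_below_aux : ∀ (k : ℕ) (v : T.V),
    Fintype.card T.V - (rootPath T v).length ≤ k → ∃ i, Anc T v (T.leaf i) := by
  intro k
  induction k with
  | zero =>
    intro v hv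
    exfalso
    have := (rp_isPath T v).length_lt
    omega
  | succ k ih =>
    intro v hv
    by_cases hdeg : T.G.degree v = 1
    · obtain ⟨i, hi⟩ := T.leaf_surj v hdeg
      exact ⟨i, hi ▸ anc_refl T v⟩
    · obtain ⟨m, hadj, hmv⟩ := exists_child T hdeg
      have hrm : rootPath T m = (rootPath T v).concat hadj := rp_concat T hadj hmv
      have hlen : (rootPath T m).length = (rootPath T v).length + 1 := by
        rw [hrm, Walk.length_concat]
      have hlt := (rp_isPath T v).length_lt
      obtain ⟨i, hi⟩ := ih m (by omega)
      have hvm : Anc T v m := by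
        unfold Anc
        rw [hrm, Walk.support_concat]
        exact List.mem_append_left _ (Walk.end_mem_support _)
      exact ⟨i, anc_trans T hvm hi⟩

lemma exists_leaf_below (v : T.V) : ∃ i, Anc T v (T.leaf i) :=
  exists_leaf_below_aux T (Fintype.card T.V) v (Nat.sub_le _ _)

lemma branch {z z' : T.V} (h : Anc T z z') (hne : z ≠ z') :
    ∃ i, Anc T z (T.leaf i) ∧ ¬ Anc T z' (T.leaf i) := by
  classical
  set r := (rootPath T z').dropUntil z h with hr
  have hrnil : ¬ r.Nil := Walk.not_nil_of_ne hne
  obtain ⟨m, hm, q, hq⟩ := Walk.not_nil_iff.mp hrnil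
  have hmr : m ∈ r.support.tail := by
    rw [hq, Walk.support_cons]
    exact Walk.start_mem_support q
  have hmz' : Anc T m z' :=
    Walk.support_dropUntil_subset _ h (List.mem_of_mem_tail hmr)
  have hmz : ¬ Anc T m z := by
    intro hcon
    have hnodup := (rp_isPath T z').support_nodup
    have hsplit := Walk.take_spec (rootPath T z') h
    rw [← hsplit, Walk.support_append] at hnodup
    have hdisj := List.disjoint_of_nodup_append hnodup
    have hm1 : m ∈ ((rootPath T z').takeUntil z h).support := by
      rw [← rp_take T h]; exact hcon
    exact hdisj hm1 hmr
  have hzm : Anc T z m := (anc_dichotomy T hm).resolve_right hmz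
  obtain ⟨m', hadj', hm'z, hm'm⟩ := children_two T hm hmz
  obtain ⟨i, hi⟩ := exists_leaf_below T m'
  have hzm' : Anc T z m' := (anc_dichotomy T hadj').resolve_right hm'z
  refine ⟨i, anc_trans T hzm' hi, ?_⟩
  intro hcon
  have hmi : Anc T m (T.leaf i) := anc_trans T hmz' hcon
  have hcomp := anc_comp T (v := T.leaf i) hmi hi
  have hrm : rootPath T m = (rootPath T z).concat hm := rp_concat T hm hmz
  have hrm' : rootPath T m' = (rootPath T z).concat hadj' := rp_concat T hadj' hm'z
  rcases hcomp with hc | hc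
  · -- Anc m m'
    unfold Anc at hc
    rw [hrm', Walk.support_concat] at hc
    rcases List.mem_append.mp hc with hmem | hmem
    · exact hmz hmem
    · exact hm'm (List.mem_singleton.mp hmem).symm
  · unfold Anc at hc
    rw [hrm, Walk.support_concat] at hc
    rcases List.mem_append.mp hc with hmem | hmem
    · exact hm'z hmem
    · exact hm'm (List.mem_singleton.mp hmem)
/-- canonical (parent, child) pair of an edge. -/
noncomputable def pc (e : Sym2 T.V) : T.V × T.V :=
  if h : ∃ p : T.V × T.V, e = s(p.1, p.2) ∧ T.G.Adj p.1 p.2 ∧ Anc T p.1 p.2 then h.choose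
  else (T.root, T.root)

noncomputable def par (e : Sym2 T.V) : T.V := (pc T e).1
noncomputable def chd (e : Sym2 T.V) : T.V := (pc T e).2

lemma pc_spec {e : Sym2 T.V} (he : e ∈ T.G.edgeSet) :
    e = s(par T e, chd T e) ∧ T.G.Adj (par T e) (chd T e) ∧ Anc T (par T e) (chd T e) := by
  have hex : ∃ p : T.V × T.V, e = s(p.1, p.2) ∧ T.G.Adj p.1 p.2 ∧ Anc T p.1 p.2 := by
    induction e using Sym2.ind with
    | _ x y =>
      have hadj : T.G.Adj x y := (SimpleGraph.mem_edgeSet _).mp he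
      rcases anc_dichotomy T hadj with h | h
      · exact ⟨(x, y), rfl, hadj, h⟩
      · exact ⟨(y, x), Sym2.eq_swap, hadj.symm, h⟩
  have := hex.choose_spec
  unfold par chd pc
  rw [dif_pos hex]
  exact this

lemma chd_not_anc {e : Sym2 T.V} (he : e ∈ T.G.edgeSet) :
    ¬ Anc T (chd T e) (par T e) := fun h =>
  ((pc_spec T he).2.1.ne (anc_antisymm T (pc_spec T he).2.2 h))

lemma rp_chd {e : Sym2 T.V} (he : e ∈ T.G.edgeSet) :
    rootPath T (chd T e) = (rootPath T (par T e)).concat (pc_spec T he).2.1 :=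
  rp_concat T _ (chd_not_anc T he)

lemma edge_mem_rp_iff {e : Sym2 T.V} (he : e ∈ T.G.edgeSet) (v : T.V) :
    e ∈ (rootPath T v).edges ↔ Anc T (chd T e) v := by
  constructor
  · intro h
    have h' := h
    rw [(pc_spec T he).1] at h'
    exact Walk.snd_mem_support_of_mem_edges _ h'
  · intro h
    have hsplit := Walk.take_spec (rootPath T v) h
    rw [← hsplit, Walk.edges_append]
    apply List.mem_append_left
    rw [← rp_take T h, rp_chd T he, Walk.edges_concat, List.concat_eq_append]
    apply List.mem_append_right
    rw [List.mem_singleton]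
    exact (pc_spec T he).1

/-- set of leaves below an edge. -/
noncomputable def Sset (e : Sym2 T.V) : Finset (Fin n) :=
  Finset.univ.filter (fun i => Anc T (chd T e) (T.leaf i))

lemma mem_Sset {e : Sym2 T.V} {i : Fin n} (he : e ∈ T.G.edgeSet) :
    i ∈ Sset T e ↔ e ∈ (rootPath T (T.leaf i)).edges := by
  rw [Sset, Finset.mem_filter, edge_mem_rp_iff T he]
  simp

lemma mem_Sset' {e : Sym2 T.V} {i : Fin n} :
    i ∈ Sset T e ↔ Anc T (chd T e) (T.leaf i) := by
  rw [Sset, Finset.mem_filter]; simp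

lemma Sset_mono {e e' : Sym2 T.V} (h : Anc T (chd T e') (chd T e)) :
    Sset T e ⊆ Sset T e' := by
  intro i hi
  rw [mem_Sset'] at hi ⊢
  exact anc_trans T h hi

lemma Sset_nonempty (e : Sym2 T.V) : (Sset T e).Nonempty := by
  obtain ⟨i, hi⟩ := exists_leaf_below T (chd T e)
  exact ⟨i, (mem_Sset' T).mpr hi⟩

lemma anc_eq {z z' : T.V} (h : Anc T z z')
    (hsub : ∀ i, Anc T z (T.leaf i) → Anc T z' (T.leaf i)) : z = z' := by
  by_contra hne
  obtain ⟨i, h1, h2⟩ := branch T h hne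
  exact h2 (hsub i h1)

lemma chd_inj {e e' : Sym2 T.V} (he : e ∈ T.G.edgeSet) (he' : e' ∈ T.G.edgeSet)
    (h : chd T e = chd T e') : e = e' := by
  have h1 := (pc_spec T he).2.1
  have h2 := (pc_spec T he').2.1
  have := parent_unique T (h1.symm) (h ▸ h2.symm) (pc_spec T he).2.2 (h ▸ (pc_spec T he').2.2)
  rw [(pc_spec T he).1, (pc_spec T he').1, ← h, this]

lemma Sset_laminar {e e' : Sym2 T.V} (hne : ((Sset T e) ∩ (Sset T e')).Nonempty) :
    Sset T e ⊆ Sset T e' ∨ Sset T e' ⊆ Sset T e := by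
  obtain ⟨i, hi⟩ := hne
  rw [Finset.mem_inter, mem_Sset' T, mem_Sset' T] at hi
  rcases anc_comp T (v := T.leaf i) hi.1 hi.2 with h | h
  · exact Or.inr (Sset_mono T h)
  · exact Or.inl (Sset_mono T h)

lemma Sset_inj {e e' : Sym2 T.V} (he : e ∈ T.G.edgeSet) (he' : e' ∈ T.G.edgeSet)
    (h : Sset T e = Sset T e') : e = e' := by
  obtain ⟨i, hi⟩ := Sset_nonempty T e
  have hi' : i ∈ Sset T e' := h ▸ hi
  rw [mem_Sset' T] at hi hi'
  apply chd_inj T he he'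
  rcases anc_comp T (v := T.leaf i) hi hi' with hc | hc
  · refine anc_eq T hc (fun j hj => ?_)
    have : j ∈ Sset T e' := h ▸ (mem_Sset' T).mpr hj
    exact (mem_Sset' T).mp this
  · refine (anc_eq T hc (fun j hj => ?_)).symm
    have : j ∈ Sset T e := h ▸ (mem_Sset' T).mpr hj
    exact (mem_Sset' T).mp this

lemma ancestor_edges {e : Sym2 T.V} (he : e ∈ T.G.edgeSet) :
    T.G.edgeFinset.filter (fun e' => Sset T e ⊆ Sset T e' ∧ e' ≠ e)
      = (rootPath T (par T e)).edges.toFinset := by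
  ext e'
  rw [Finset.mem_filter, List.mem_toFinset, SimpleGraph.mem_edgeFinset]
  constructor
  · rintro ⟨he', hsub, hne⟩
    obtain ⟨i, hi⟩ := Sset_nonempty T e
    have hi' : i ∈ Sset T e' := hsub hi
    rw [mem_Sset' T] at hi hi'
    rcases anc_comp T (v := T.leaf i) hi hi' with hc | hc
    · exfalso
      exact hne (Sset_inj T he' he (Finset.Subset.antisymm (Sset_mono T hc) hsub))
      -- careful direction
    · have hcc : chd T e' ≠ chd T e := fun hcc => hne (chd_inj T he' he hcc)
      have : chd T e' ∈ (rootPath T (chd T e)).support := hc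
      rw [rp_chd T he, Walk.support_concat] at this
      rcases List.mem_append.mp this with hmem | hmem
      · exact (edge_mem_rp_iff T he' _).mpr hmem
      · exact absurd (List.mem_singleton.mp hmem) hcc
  · intro h
    have he' : e' ∈ T.G.edgeSet := Walk.edges_subset_edgeSet _ h
    have hc : Anc T (chd T e') (par T e) := (edge_mem_rp_iff T he' _).mp h
    refine ⟨he', Sset_mono T (anc_trans T hc (pc_spec T he).2.2), fun hne => ?_⟩
    subst hne
    exact chd_not_anc T he hc

lemma depth_chd {e : Sym2 T.V} (he : e ∈ T.G.edgeSet) :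
    depth T (chd T e) = depth T (par T e) + T.weight e := by
  rw [depth, depth, rp_chd T he, Walk.edges_concat, List.concat_eq_append, List.map_append,
    List.sum_append]
  simp only [List.map_singleton, List.sum_singleton]
  rw [← (pc_spec T he).1]

lemma hEdge_eq {e : Sym2 T.V} (he : e ∈ T.G.edgeSet) :
    hEdge T e = T.d - depth T (par T e) := by
  have hw := T.weight_nonneg e he
  have hd := depth_chd T he
  rw [hEdge]
  conv_lhs => rw [(pc_spec T he).1]
  rw [Sym2.lift_mk]
  simp only
  rw [min_eq_left (by omega)]

lemma depth_toFinset (v : T.V) :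
    depth T v = ∑ e ∈ (rootPath T v).edges.toFinset, T.weight e := by
  rw [depth, List.sum_toFinset _ ((rp_isPath T v).edges_nodup)]

lemma h_formula {e : Sym2 T.V} (he : e ∈ T.G.edgeSet) :
    hEdge T e = T.d -
      ∑ e' ∈ T.G.edgeFinset.filter (fun e' => Sset T e ⊆ Sset T e' ∧ e' ≠ e), T.weight e' := by
  rw [ancestor_edges T he, ← depth_toFinset, hEdge_eq T he]

lemma rp_leaf_sum (i : Fin n) :
    ∑ e ∈ (rootPath T (T.leaf i)).edges.toFinset, T.weight e = T.d := by
  rw [← depth_toFinset]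
  exact T.equidistant i _ (rp_isPath T _)

lemma total_weight_mul_card :
    ∑ e ∈ T.G.edgeFinset, T.weight e * ((Sset T e).card : ℤ) = n * T.d := by
  have h1 : ∀ e ∈ T.G.edgeFinset, T.weight e * ((Sset T e).card : ℤ)
      = ∑ i : Fin n, (if e ∈ (rootPath T (T.leaf i)).edges then T.weight e else 0) := by
    intro e he
    rw [SimpleGraph.mem_edgeFinset] at he
    have : Sset T e = Finset.univ.filter (fun i => e ∈ (rootPath T (T.leaf i)).edges) := by
      ext i; rw [mem_Sset T he, Finset.mem_filter]; simp
    rw [this, ← Finset.sum_filter, Finset.sum_const, nsmul_eq_mul, mul_comm]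
  rw [Finset.sum_congr rfl h1, Finset.sum_comm]
  have h2 : ∀ i : Fin n,
      ∑ e ∈ T.G.edgeFinset, (if e ∈ (rootPath T (T.leaf i)).edges then T.weight e else 0)
        = T.d := by
    intro i
    rw [← Finset.sum_filter]
    have heq : T.G.edgeFinset.filter (fun e => e ∈ (rootPath T (T.leaf i)).edges)
        = (rootPath T (T.leaf i)).edges.toFinset := by
      ext e
      rw [Finset.mem_filter, List.mem_toFinset, SimpleGraph.mem_edgeFinset]
      exact ⟨fun h => h.2, fun h => ⟨Walk.edges_subset_edgeSet _ h, h⟩⟩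
    rw [heq, rp_leaf_sum]
  rw [Finset.sum_congr rfl (fun i _ => h2 i)]
  simp [Finset.sum_const, Finset.card_univ]

section Core

variable {N : ℕ}

private lemma ite_mul_expand2 (p q c : Prop) [Decidable p] [Decidable q] [Decidable c] :
    ((if p then (1:ℂ) else 0) - (if q then 1 else 0)) * (if c then (1:ℂ) else 0)
      = (if p then (if c then (1:ℂ) else 0) else 0)
        - (if q then (if c then (1:ℂ) else 0) else 0) := by
  by_cases h1 : p <;> by_cases h2 : q <;> by_cases h3 : c <;> simp [h1, h2, h3]

private lemma ite_mul_expand1 (p c : Prop) [Decidable p] [Decidable c] :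
    (if p then (1:ℂ) else 0) * (if c then (1:ℂ) else 0)
      = (if p then (if c then (1:ℂ) else 0) else 0) := by
  by_cases h1 : p <;> by_cases h3 : c <;> simp [h1, h3]

/-- private points of a member of a family of finsets. -/
def privset (R : Fin N → Finset (Fin N)) (r : Fin N) : Finset (Fin N) :=
  (R r).filter (fun x => ∀ r', R r' ⊂ R r → x ∉ R r')

lemma core_inj {R : Fin N → Finset (Fin N)}
    (ind : ∀ v : Fin N → ℂ, (∀ x, ∑ r, v r * (if x ∈ R r then (1:ℂ) else 0) = 0) → v = 0) :
    Function.Injective R := by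
  intro r r' hrr'
  by_contra hne
  set v : Fin N → ℂ := fun s => (if s = r then (1:ℂ) else 0) - (if s = r' then 1 else 0) with hv
  have hzero : v = 0 := by
    apply ind
    intro x
    rw [Finset.sum_congr rfl
      (fun s _ => ite_mul_expand2 (s = r) (s = r') (x ∈ R s)), Finset.sum_sub_distrib,
      Finset.sum_ite_eq' Finset.univ r _, Finset.sum_ite_eq' Finset.univ r' _]
    simp [hrr']
  have : v r = 0 := by rw [hzero]; rfl
  simp [hv, hne] at this

lemma core_nonempty {R : Fin N → Finset (Fin N)}
    (ind : ∀ v : Fin N → ℂ, (∀ x, ∑ r, v r * (if x ∈ R r then (1:ℂ) else 0) = 0) → v = 0)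
    (r : Fin N) : (R r).Nonempty := by
  rw [Finset.nonempty_iff_ne_empty]
  intro hemp
  set v : Fin N → ℂ := fun s => if s = r then (1:ℂ) else 0 with hv
  have hzero : v = 0 := by
    apply ind
    intro x
    rw [Finset.sum_congr rfl
      (fun s _ => ite_mul_expand1 (s = r) (x ∈ R s)), Finset.sum_ite_eq' Finset.univ r _]
    simp [hemp]
  have : v r = 0 := by rw [hzero]; rfl
  simp [hv] at this

lemma core_priv_nonempty {R : Fin N → Finset (Fin N)}
    (lam : ∀ r r', ((R r) ∩ (R r')).Nonempty → R r ⊆ R r' ∨ R r' ⊆ R r)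
    (ind : ∀ v : Fin N → ℂ, (∀ x, ∑ r, v r * (if x ∈ R r then (1:ℂ) else 0) = 0) → v = 0)
    (r : Fin N) : (privset R r).Nonempty := by
  classical
  rw [Finset.nonempty_iff_ne_empty]
  intro hemp
  have hcov : ∀ x ∈ R r, ∃ r', R r' ⊂ R r ∧ x ∈ R r' := by
    intro x hx
    by_contra hcon
    push_neg at hcon
    have : x ∈ privset R r := by
      rw [privset, Finset.mem_filter]
      exact ⟨hx, fun r' hr' hx' => (hcon r' hr') hx'⟩
    rw [hemp] at this
    exact absurd this (Finset.notMem_empty x)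
  set C : Finset (Fin N) :=
    Finset.univ.filter (fun r' => R r' ⊂ R r ∧ ∀ r'', R r' ⊂ R r'' → ¬ R r'' ⊂ R r) with hC
  have hcovC : ∀ x ∈ R r, ∃ r' ∈ C, x ∈ R r' := by
    intro x hx
    obtain ⟨r₀, hr₀, hx₀⟩ := hcov x hx
    have hFne : (Finset.univ.filter (fun r' => R r' ⊂ R r ∧ x ∈ R r')).Nonempty :=
      ⟨r₀, by simp [hr₀, hx₀]⟩
    obtain ⟨rm, hrm, hmax⟩ := Finset.exists_max_image _ (fun r' => (R r').card) hFne
    rw [Finset.mem_filter] at hrm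
    refine ⟨rm, ?_, hrm.2.2⟩
    rw [hC, Finset.mem_filter]
    refine ⟨Finset.mem_univ _, hrm.2.1, fun r'' h1 h2 => ?_⟩
    have : r'' ∈ Finset.univ.filter (fun r' => R r' ⊂ R r ∧ x ∈ R r') := by
      simp only [Finset.mem_filter, Finset.mem_univ, true_and]
      exact ⟨h2, h1.subset hrm.2.2⟩
    have hcard := hmax r'' this
    have := Finset.card_lt_card h1
    omega
  have huniq : ∀ x r₁ r₂, r₁ ∈ C → r₂ ∈ C → x ∈ R r₁ → x ∈ R r₂ → r₁ = r₂ := by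
    intro x r₁ r₂ h1 h2 hx1 hx2
    rw [hC, Finset.mem_filter] at h1 h2
    rcases lam r₁ r₂ ⟨x, Finset.mem_inter.mpr ⟨hx1, hx2⟩⟩ with hsub | hsub
    · rcases eq_or_ne (R r₁) (R r₂) with heq | hne
      · exact core_inj ind heq
      · exact absurd h2.2.1 (h1.2.2 r₂ (ssubset_of_subset_of_ne hsub hne))
    · rcases eq_or_ne (R r₂) (R r₁) with heq | hne
      · exact (core_inj ind heq).symm
      · exact absurd h1.2.1 (h2.2.2 r₁ (ssubset_of_subset_of_ne hsub hne))
  have hrel : ∀ x : Fin N, (if x ∈ R r then (1:ℂ) else 0)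
      = ∑ r' ∈ C, (if x ∈ R r' then (1:ℂ) else 0) := by
    intro x
    by_cases hx : x ∈ R r
    · rw [if_pos hx]
      obtain ⟨r', hr'C, hxr'⟩ := hcovC x hx
      have : C.filter (fun r' => x ∈ R r') = {r'} := by
        ext s
        simp only [Finset.mem_filter, Finset.mem_singleton]
        constructor
        · rintro ⟨hsC, hxs⟩
          exact huniq x s r' hsC hr'C hxs hxr'
        · rintro rfl
          exact ⟨hr'C, hxr'⟩
      rw [Finset.sum_boole, this, Finset.card_singleton, Nat.cast_one]
    · rw [if_neg hx]
      symm
      apply Finset.sum_eq_zero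
      intro r' hr'
      rw [hC, Finset.mem_filter] at hr'
      rw [if_neg (fun hxr' => hx (hr'.2.1.subset hxr'))]
  have hrC : r ∉ C := by
    rw [hC, Finset.mem_filter]
    rintro ⟨-, hss, -⟩
    exact (ssubset_irrefl _) hss
  set v : Fin N → ℂ := fun s => (if s = r then (1:ℂ) else 0) - (if s ∈ C then 1 else 0) with hv
  have hzero : v = 0 := by
    apply ind
    intro x
    rw [Finset.sum_congr rfl
      (fun s _ => ite_mul_expand2 (s = r) (s ∈ C) (x ∈ R s)), Finset.sum_sub_distrib,
      Finset.sum_ite_eq' Finset.univ r _]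
    rw [← Finset.sum_filter, Finset.filter_mem_eq_inter, Finset.univ_inter]
    simp only [Finset.mem_univ, if_true]
    rw [hrel x]
    ring
  have : v r = 0 := by rw [hzero]; rfl
  simp [hv, hrC] at this

lemma core_count {R : Fin N → Finset (Fin N)}
    (hroot : ∃ r0, R r0 = Finset.univ)
    (lam : ∀ r r', ((R r) ∩ (R r')).Nonempty → R r ⊆ R r' ∨ R r' ⊆ R r)
    (ind : ∀ v : Fin N → ℂ, (∀ x, ∑ r, v r * (if x ∈ R r then (1:ℂ) else 0) = 0) → v = 0)
    (Q : Finset (Fin N))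
    (hQ : ∀ r, (Q ∩ R r).Nonempty → Q ⊆ R r ∨ R r ⊆ Q) :
    Q.card ≤ (Finset.univ.filter (fun r => R r ⊂ Q)).card + 1 := by
  classical
  -- every point has a private home
  have hcover : ∀ x : Fin N, ∃ r, x ∈ privset R r := by
    intro x
    obtain ⟨r0, hr0⟩ := hroot
    have hFne : (Finset.univ.filter (fun r' => x ∈ R r')).Nonempty :=
      ⟨r0, by simp [hr0]⟩
    obtain ⟨rm, hrm, hmin⟩ := Finset.exists_min_image _ (fun r' => (R r').card) hFne
    rw [Finset.mem_filter] at hrm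
    refine ⟨rm, ?_⟩
    rw [privset, Finset.mem_filter]
    refine ⟨hrm.2, fun r' hss hmem => ?_⟩
    have : r' ∈ Finset.univ.filter (fun r' => x ∈ R r') := by simp [hmem]
    have := hmin r' this
    have := Finset.card_lt_card hss
    omega
  have hdisj : ∀ {x r₁ r₂}, x ∈ privset R r₁ → x ∈ privset R r₂ → r₁ = r₂ := by
    intro x r₁ r₂ h1 h2
    rw [privset, Finset.mem_filter] at h1 h2
    rcases lam r₁ r₂ ⟨x, Finset.mem_inter.mpr ⟨h1.1, h2.1⟩⟩ with hsub | hsub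
    · rcases eq_or_ne (R r₁) (R r₂) with heq | hne
      · exact core_inj ind heq
      · exact absurd h1.1 (h2.2 r₁ (ssubset_of_subset_of_ne hsub hne))
    · rcases eq_or_ne (R r₂) (R r₁) with heq | hne
      · exact (core_inj ind heq).symm
      · exact absurd h2.1 (h1.2 r₂ (ssubset_of_subset_of_ne hsub hne))
  -- the map sending a point to its private home
  choose pf pf_spec using hcover
  have pf_surj : Function.Surjective pf := by
    intro r
    obtain ⟨x, hx⟩ := core_priv_nonempty lam ind r
    exact ⟨x, hdisj (pf_spec x) hx⟩
  have pf_inj : Function.Injective pf := Finite.injective_iff_surjective.mpr pf_surj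
  -- good and bad points of Q
  set Good : Finset (Fin N) := Q.filter (fun x => R (pf x) ⊂ Q) with hGood
  have hsub_QR : ∀ x ∈ Q \ Good, Q ⊆ R (pf x) := by
    intro x hx
    rw [Finset.mem_sdiff, hGood, Finset.mem_filter] at hx
    have hxQ := hx.1
    have hnss : ¬ R (pf x) ⊂ Q := fun h => hx.2 ⟨hxQ, h⟩
    have hxR : x ∈ R (pf x) := Finset.mem_of_mem_filter _ (pf_spec x)
    rcases hQ (pf x) ⟨x, Finset.mem_inter.mpr ⟨hxQ, hxR⟩⟩ with h | h
    · exact h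
    · rcases eq_or_ne (R (pf x)) Q with heq | hne
      · exact heq.ge
      · exact absurd (ssubset_of_subset_of_ne h hne) hnss
  have hbad : (Q \ Good).card ≤ 1 := by
    refine Finset.card_le_one.mpr (fun x hx y hy => ?_)
    have hQx := hsub_QR x hx
    have hQy := hsub_QR y hy
    have hxQ : x ∈ Q := (Finset.mem_sdiff.mp hx).1
    have hyQ : y ∈ Q := (Finset.mem_sdiff.mp hy).1
    have hxRy : x ∈ R (pf y) := hQy hxQ
    have hxRx : x ∈ R (pf x) := hQx hxQ
    apply pf_inj
    rcases lam (pf x) (pf y) ⟨x, Finset.mem_inter.mpr ⟨hxRx, hxRy⟩⟩ with hsub | hsub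
    · rcases eq_or_ne (R (pf x)) (R (pf y)) with heq | hne
      · exact core_inj ind heq
      · exfalso
        have hss := ssubset_of_subset_of_ne hsub hne
        have hypriv := pf_spec y
        rw [privset, Finset.mem_filter] at hypriv
        exact hypriv.2 (pf x) hss (hQx hyQ)
    · rcases eq_or_ne (R (pf y)) (R (pf x)) with heq | hne
      · exact (core_inj ind heq).symm
      · exfalso
        have hss := ssubset_of_subset_of_ne hsub hne
        have hxpriv := pf_spec x
        rw [privset, Finset.mem_filter] at hxpriv
        exact hxpriv.2 (pf y) hss (hQy hxQ)
  have hgood : Good.card ≤ (Finset.univ.filter (fun r => R r ⊂ Q)).card := by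
    apply Finset.card_le_card_of_injOn pf
    · intro x hx
      simp only [Finset.mem_coe, hGood, Finset.mem_filter] at hx
      simp [hx.2]
    · exact fun x _ y _ h => pf_inj h
  have hQcard : Q.card ≤ Good.card + (Q \ Good).card := by
    have hGQ : Good ⊆ Q := Finset.filter_subset _ _
    have := Finset.card_sdiff_of_subset hGQ
    omega
  omega

end Core

section Assembly

/-- a junk value -/
noncomputable def dflt : Sym2 T.V := s(T.root, T.root)

noncomputable def Aset : Fin n → Finset (Sym2 T.V × Sym2 T.V) := fun r =>
  if r.val = 0 then {(dflt T, dflt T)}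
  else if r.val = 2 then T.G.edgeFinset ×ˢ T.G.edgeFinset
  else T.G.edgeFinset ×ˢ {dflt T}

def jdx (r : Fin n) : ℕ := if r.val = 1 then 1 else r.val - 1

noncomputable def kExp (r : Fin n) (p : Sym2 T.V × Sym2 T.V) : ℤ :=
  if r.val = 0 then 0
  else if r.val = 2 then -(hEdge T p.1 + hEdge T p.2)
  else -(hEdge T p.1)

def zCoef (a : ℕ → Sym2 T.V → ℂ) (r : Fin n) (p : Sym2 T.V × Sym2 T.V) : ℂ :=
  if r.val = 0 then 1
  else if r.val = 2 then a 1 p.1 * a 1 p.2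
  else a (jdx r) p.1

noncomputable def Bent (r : Fin n) (p : Sym2 T.V × Sym2 T.V) (c : Fin n) : ℂ :=
  if r.val = 0 then 1
  else if r.val = 2 then
    (if p.1 ∈ (rootPath T (T.leaf c)).edges ∧ p.2 ∈ (rootPath T (T.leaf c)).edges
      then 1 else 0)
  else (if p.1 ∈ (rootPath T (T.leaf c)).edges then 1 else 0)

lemma rp_edges_filter (v : T.V) :
    T.G.edgeFinset.filter (fun e => e ∈ (rootPath T v).edges)
      = (rootPath T v).edges.toFinset := by
  ext e
  rw [Finset.mem_filter, List.mem_toFinset, SimpleGraph.mem_edgeFinset]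
  exact ⟨fun h => h.2, fun h => ⟨Walk.edges_subset_edgeSet _ h, h⟩⟩

lemma xval_eq (a : ℕ → Sym2 T.V → ℂ) (j : ℕ) (c : Fin n) :
    xval T a j c = ∑ e ∈ T.G.edgeFinset,
      (if e ∈ (rootPath T (T.leaf c)).edges
        then (HahnSeries.single (-(hEdge T e)) (a j e) : LaurentSeries ℂ) else 0) := by
  rw [xval, ← List.sum_toFinset _ ((rp_isPath T (T.leaf c)).edges_nodup),
    ← rp_edges_filter T (T.leaf c), Finset.sum_filter]

lemma row_eq (a : ℕ → Sym2 T.V → ℂ) (r : Fin n) :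
    (fun c => Mmat T a r c)
      = ∑ p ∈ Aset T r, (HahnSeries.single (kExp T r p) (zCoef T a r p) : LaurentSeries ℂ)
          • (fun c => (HahnSeries.C : ℂ →+* LaurentSeries ℂ) (Bent T r p c)) := by
  classical
  funext c
  rw [Finset.sum_apply]
  simp only [Pi.smul_apply, smul_eq_mul]
  by_cases h0 : r.val = 0
  · simp only [Mmat, Aset, kExp, zCoef, Bent, if_pos h0]
    rw [Finset.sum_singleton]
    simp [HahnSeries.single_zero_one]
  · by_cases h2 : r.val = 2
    · have h1 : ¬ r.val = 1 := by omega
      simp only [Mmat, Aset, kExp, zCoef, Bent, if_neg h0, if_pos h2, if_neg h1]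
      rw [xval_eq, sq, Finset.sum_mul_sum, Finset.sum_product]
      refine Finset.sum_congr rfl (fun e he => Finset.sum_congr rfl (fun e' he' => ?_))
      by_cases hm : e ∈ (rootPath T (T.leaf c)).edges <;>
        by_cases hm' : e' ∈ (rootPath T (T.leaf c)).edges <;>
        simp [hm, hm', HahnSeries.single_mul_single, neg_add, add_comm]
    · -- rows 1 and ≥ 3 : a single sum
      have hx : Mmat T a r c = xval T a (jdx r) c := by
        by_cases h1 : r.val = 1
        · simp only [Mmat, jdx, if_neg h0, if_pos h1]
        · simp only [Mmat, jdx, if_neg h0, if_neg h1, if_neg h2]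
      rw [hx, xval_eq]
      have hA : Aset T r = T.G.edgeFinset ×ˢ {dflt T} := by
        simp only [Aset, if_neg h0, if_neg h2]
      rw [hA, Finset.sum_product]
      refine Finset.sum_congr rfl (fun e he => ?_)
      rw [Finset.sum_singleton]
      simp only [kExp, zCoef, Bent, if_neg h0, if_neg h2]
      by_cases hm : e ∈ (rootPath T (T.leaf c)).edges <;> simp [hm]

lemma prod_single {ι : Type*} (s : Finset ι) (k : ι → ℤ) (z : ι → ℂ) :
    (∏ i ∈ s, (HahnSeries.single (k i) (z i) : LaurentSeries ℂ))
      = HahnSeries.single (∑ i ∈ s, k i) (∏ i ∈ s, z i) := by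
  classical
  induction s using Finset.cons_induction with
  | empty => simp [HahnSeries.single_zero_one]
  | cons i s hi ih =>
    rw [Finset.prod_cons, Finset.sum_cons, Finset.prod_cons, ih,
      HahnSeries.single_mul_single]

lemma single_mul_alg (k : ℤ) (z w : ℂ) :
    (HahnSeries.single k z : LaurentSeries ℂ) * (HahnSeries.C : ℂ →+* LaurentSeries ℂ) w
      = HahnSeries.single k (z * w) := by
  rw [HahnSeries.C_apply, HahnSeries.single_mul_single, add_zero]

lemma det_expand (a : ℕ → Sym2 T.V → ℂ) :
    (Mmat T a).det = ∑ ε ∈ Fintype.piFinset (Aset T),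
      (HahnSeries.single (∑ r, kExp T r (ε r)) ((∏ r, zCoef T a r (ε r)) *
        (Matrix.of fun r c => Bent T r (ε r) c).det) : LaurentSeries ℂ) := by
  classical
  have hM : Mmat T a = fun r => ∑ p ∈ Aset T r,
      (HahnSeries.single (kExp T r p) (zCoef T a r p) : LaurentSeries ℂ)
        • (fun c => (HahnSeries.C : ℂ →+* LaurentSeries ℂ) (Bent T r p c)) :=
    funext (fun r => row_eq T a r)
  show Matrix.detRowAlternating (Mmat T a) = _
  rw [hM]
  rw [show (Matrix.detRowAlternating : (Fin n → LaurentSeries ℂ) [⋀^Fin n]→ₗ[LaurentSeries ℂ] LaurentSeries ℂ)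
        (fun r => ∑ p ∈ Aset T r,
          (HahnSeries.single (kExp T r p) (zCoef T a r p) : LaurentSeries ℂ)
            • (fun c => (HahnSeries.C : ℂ →+* LaurentSeries ℂ) (Bent T r p c)))
      = (Matrix.detRowAlternating (R := LaurentSeries ℂ)).toMultilinearMap
        (fun r => ∑ p ∈ Aset T r,
          (HahnSeries.single (kExp T r p) (zCoef T a r p) : LaurentSeries ℂ)
            • (fun c => (HahnSeries.C : ℂ →+* LaurentSeries ℂ) (Bent T r p c))) from rfl]
  rw [MultilinearMap.map_sum_finset]
  refine Finset.sum_congr rfl (fun ε hε => ?_)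
  rw [MultilinearMap.map_smul_univ]
  have hdet : (Matrix.detRowAlternating (R := LaurentSeries ℂ)).toMultilinearMap
      (fun r => (fun c => (HahnSeries.C : ℂ →+* LaurentSeries ℂ) (Bent T r (ε r) c)))
      = ((HahnSeries.C : ℂ →+* LaurentSeries ℂ).mapMatrix
          (Matrix.of fun r c => Bent T r (ε r) c)).det := rfl
  rw [hdet, ← RingHom.map_det, prod_single, smul_eq_mul, single_mul_alg]

end Assembly

lemma sum_order_bound {ι : Type*} (s : Finset ι) (f : ι → LaurentSeries ℂ) (Dv : ℤ)
    (hf : ∀ i ∈ s, f i = 0 ∨ Dv ≤ (f i).order) :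
    (∑ i ∈ s, f i) = 0 ∨ Dv ≤ (∑ i ∈ s, f i).order := by
  classical
  induction s using Finset.cons_induction with
  | empty => exact Or.inl (by simp)
  | cons i s hi ih =>
    rw [Finset.sum_cons]
    have hfi := hf i (Finset.mem_cons_self i s)
    have hrest := ih (fun j hj => hf j (Finset.mem_cons.mpr (Or.inr hj)))
    rcases hfi with h1 | h1
    · rw [h1, zero_add]; exact hrest
    rcases hrest with h2 | h2
    · rw [h2, add_zero]; exact Or.inr h1
    by_cases hz : f i + (∑ j ∈ s, f j) = 0
    · exact Or.inl hz
    · exact Or.inr (le_trans (le_min h1 h2) (HahnSeries.min_order_le_order_add hz))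

lemma eps_bound (hn : 4 ≤ n) (ε : Fin n → Sym2 T.V × Sym2 T.V)
    (hε : ε ∈ Fintype.piFinset (Aset T))
    (hB : (Matrix.of fun r c => Bent T r (ε r) c).det ≠ 0) :
    -(∑ e ∈ T.G.edgeFinset, T.weight e) ≤ ∑ r, kExp T r (ε r) := by
  classical
  rw [Fintype.mem_piFinset] at hε
  have hE1 : ∀ r : Fin n, r.val ≠ 0 → (ε r).1 ∈ T.G.edgeSet := by
    intro r h0
    have h := hε r
    rw [Aset, if_neg h0] at h
    by_cases h2 : r.val = 2
    · rw [if_pos h2] at h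
      exact (SimpleGraph.mem_edgeFinset).mp (Finset.mem_product.mp h).1
    · rw [if_neg h2] at h
      exact (SimpleGraph.mem_edgeFinset).mp (Finset.mem_product.mp h).1
  set r0 : Fin n := ⟨0, by omega⟩ with hr0
  set r2 : Fin n := ⟨2, by omega⟩ with hr2
  have hr2v : r2.val = 2 := rfl
  have hr0v : r0.val = 0 := rfl
  have hE2 : (ε r2).2 ∈ T.G.edgeSet := by
    have h := hε r2
    rw [Aset, if_neg (by simp [hr2v] : ¬ r2.val = 0), if_pos hr2v] at h
    exact (SimpleGraph.mem_edgeFinset).mp (Finset.mem_product.mp h).2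
  have hE2' : (ε r2).1 ∈ T.G.edgeSet := hE1 r2 (by simp [hr2v])
  -- the two edges of row 2 must have intersecting leaf sets
  have hne : ((Sset T (ε r2).1) ∩ (Sset T (ε r2).2)).Nonempty := by
    by_contra hcon
    apply hB
    apply Matrix.det_eq_zero_of_row_eq_zero r2
    intro c
    show Bent T r2 (ε r2) c = 0
    rw [Bent, if_neg (by simp [hr2v] : ¬ r2.val = 0), if_pos hr2v, if_neg]
    rintro ⟨hm1, hm2⟩
    exact hcon ⟨c, Finset.mem_inter.mpr
      ⟨(mem_Sset T hE2').mpr hm1, (mem_Sset T hE2).mpr hm2⟩⟩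
  -- orient the pair of row 2
  obtain ⟨f₂, g, hf₂E, hgE, hsub, hks, hrow⟩ :
      ∃ f₂ g, f₂ ∈ T.G.edgeSet ∧ g ∈ T.G.edgeSet ∧ Sset T f₂ ⊆ Sset T g ∧
        hEdge T (ε r2).1 + hEdge T (ε r2).2 = hEdge T f₂ + hEdge T g ∧
        (∀ c : Fin n, ((ε r2).1 ∈ (rootPath T (T.leaf c)).edges
            ∧ (ε r2).2 ∈ (rootPath T (T.leaf c)).edges) ↔ c ∈ Sset T f₂) := by
    rcases Sset_laminar T hne with hs | hs
    · refine ⟨(ε r2).1, (ε r2).2, hE2', hE2, hs, rfl, fun c => ?_⟩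
      constructor
      · rintro ⟨hm1, _⟩; exact (mem_Sset T hE2').mpr hm1
      · intro hc
        exact ⟨(mem_Sset T hE2').mp hc, (mem_Sset T hE2).mp (hs hc)⟩
    · refine ⟨(ε r2).2, (ε r2).1, hE2, hE2', hs, by ring, fun c => ?_⟩
      constructor
      · rintro ⟨_, hm2⟩; exact (mem_Sset T hE2).mpr hm2
      · intro hc
        exact ⟨(mem_Sset T hE2').mp (hs hc), (mem_Sset T hE2).mp hc⟩
  -- the family of row sets
  set Rf : Fin n → Finset (Fin n) := fun r =>
    if r.val = 0 then Finset.univ else if r.val = 2 then Sset T f₂ else Sset T ((ε r).1)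
    with hRf
  have hBent : ∀ r c, Bent T r (ε r) c = if c ∈ Rf r then 1 else 0 := by
    intro r c
    by_cases h0 : r.val = 0
    · simp [Bent, hRf, h0]
    by_cases h2 : r.val = 2
    · have hrr : r = r2 := Fin.ext h2
      have heps : ε r = ε r2 := by rw [hrr]
      have hRr : Rf r = Sset T f₂ := by
        simp only [hRf]
        rw [if_neg h0, if_pos h2]
      rw [Bent, if_neg h0, if_pos h2, heps, hRr, if_congr (hrow c) rfl rfl]
    · have hRr : Rf r = Sset T ((ε r).1) := by
        simp only [hRf]
        rw [if_neg h0, if_neg h2]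
      rw [Bent, if_neg h0, if_neg h2, hRr,
        if_congr (mem_Sset T (hE1 r h0)).symm rfl rfl]
  have hRcases : ∀ r, Rf r = Finset.univ ∨ ∃ e, e ∈ T.G.edgeSet ∧ Rf r = Sset T e := by
    intro r
    by_cases h0 : r.val = 0
    · left; simp [hRf, h0]
    by_cases h2 : r.val = 2
    · right; exact ⟨f₂, hf₂E, by simp [hRf, h0, h2]⟩
    · right; exact ⟨(ε r).1, hE1 r h0, by simp [hRf, h0, h2]⟩
  have lam : ∀ r r', ((Rf r) ∩ (Rf r')).Nonempty → Rf r ⊆ Rf r' ∨ Rf r' ⊆ Rf r := by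
    intro r r' hne'
    rcases hRcases r with h | ⟨e, heE, he⟩
    · right; rw [h]; exact Finset.subset_univ _
    rcases hRcases r' with h' | ⟨e', heE', he'⟩
    · left; rw [h']; exact Finset.subset_univ _
    rw [he, he'] at hne' ⊢
    exact Sset_laminar T hne'
  have ind : ∀ v : Fin n → ℂ, (∀ x, ∑ r, v r * (if x ∈ Rf r then (1:ℂ) else 0) = 0) → v = 0 := by
    intro v hv
    by_contra hv0
    apply hB
    rw [← Matrix.exists_vecMul_eq_zero_iff]
    refine ⟨v, hv0, ?_⟩
    funext c
    have : ∀ r, v r * (Matrix.of fun r c => Bent T r (ε r) c) r c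
        = v r * (if c ∈ Rf r then (1:ℂ) else 0) := by
      intro r
      rw [Matrix.of_apply, hBent]
    simp only [Matrix.vecMul, dotProduct, Pi.zero_apply]
    rw [Finset.sum_congr rfl (fun r _ => this r)]
    exact hv c
  -- the n "units"
  set un : Fin n → Sym2 T.V := fun r =>
    if r.val = 0 then g else if r.val = 2 then f₂ else (ε r).1 with hun
  have hunE : ∀ r, un r ∈ T.G.edgeSet := by
    intro r
    by_cases h0 : r.val = 0
    · simp [hun, h0, hgE]
    by_cases h2 : r.val = 2
    · simp [hun, h0, h2, hf₂E]
    · simp only [hun, if_neg h0, if_neg h2]; exact hE1 r h0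
  have hSun : ∀ r : Fin n, r.val ≠ 0 → Rf r = Sset T (un r) := by
    intro r h0
    by_cases h2 : r.val = 2
    · simp only [hRf, hun]
      rw [if_neg h0, if_pos h2, if_neg h0, if_pos h2]
    · simp only [hRf, hun]
      rw [if_neg h0, if_neg h2, if_neg h0, if_neg h2]
  -- K identity
  have hK : ∑ r, kExp T r (ε r) = - ∑ r, hEdge T (un r) := by
    have hφ : ∀ r : Fin n, kExp T r (ε r) + hEdge T (un r)
        = (if r = r0 then hEdge T g else 0) + (if r = r2 then -(hEdge T g) else 0) := by
      intro r
      by_cases h0 : r.val = 0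
      · have hrr : r = r0 := Fin.ext h0
        have hone : r ≠ r2 := fun h => by rw [h, hr2v] at h0; exact absurd h0 (by omega)
        have hu : un r = g := by simp only [hun]; rw [if_pos h0]
        rw [kExp, if_pos h0, hu, if_pos hrr, if_neg hone]
        ring
      by_cases h2 : r.val = 2
      · have hrr : r = r2 := Fin.ext h2
        have hzero : r ≠ r0 := fun h => by rw [h] at h0; exact h0 hr0v
        have hu : un r = f₂ := by simp only [hun]; rw [if_neg h0, if_pos h2]
        have heps : ε r = ε r2 := by rw [hrr]
        rw [kExp, if_neg h0, if_pos h2, hu, if_neg hzero, if_pos hrr, heps, hks]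
        ring
      · have hz0 : r ≠ r0 := fun h => h0 (by rw [h])
        have hz2 : r ≠ r2 := fun h => h2 (by rw [h])
        have hu : un r = (ε r).1 := by simp only [hun]; rw [if_neg h0, if_neg h2]
        rw [kExp, if_neg h0, if_neg h2, hu, if_neg hz0, if_neg hz2]
        ring
    have hsum := Finset.sum_congr rfl (fun r (_ : r ∈ Finset.univ) => hφ r)
    rw [Finset.sum_add_distrib, Finset.sum_add_distrib,
      Finset.sum_ite_eq' Finset.univ r0 (fun _ => hEdge T g),
      Finset.sum_ite_eq' Finset.univ r2 (fun _ => -(hEdge T g))] at hsum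
    simp only [Finset.mem_univ, if_true] at hsum
    linarith
  -- per-edge counting
  have hcnt : ∀ e' ∈ T.G.edgeFinset,
      ((Sset T e').card : ℤ) ≤
        ((Finset.univ.filter (fun r => Sset T (un r) ⊆ Sset T e' ∧ e' ≠ un r)).card : ℤ) + 1 := by
    intro e' he'
    have hQ : ∀ r, ((Sset T e') ∩ Rf r).Nonempty → Sset T e' ⊆ Rf r ∨ Rf r ⊆ Sset T e' := by
      intro r hne'
      rcases hRcases r with h | ⟨e'', he''E, he''⟩
      · left; rw [h]; exact Finset.subset_univ _
      · rw [he''] at hne' ⊢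
        exact Sset_laminar T hne'
    have hcore := core_count ⟨r0, by simp [hRf, hr0v]⟩ lam ind (Sset T e') hQ
    have hmono : (Finset.univ.filter (fun r => Rf r ⊂ Sset T e'))
        ⊆ Finset.univ.filter (fun r => Sset T (un r) ⊆ Sset T e' ∧ e' ≠ un r) := by
      intro r hr
      rw [Finset.mem_filter] at hr ⊢
      refine ⟨Finset.mem_univ _, ?_⟩
      have hss := hr.2
      have h0 : r.val ≠ 0 := by
        intro h0
        rw [hRf] at hss
        simp only [if_pos h0] at hss
        have : Sset T e' = Finset.univ :=
          Finset.Subset.antisymm (Finset.subset_univ _) hss.subset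
        rw [this] at hss
        exact ssubset_irrefl _ hss
      rw [hSun r h0] at hss
      refine ⟨hss.subset, fun heq => ?_⟩
      rw [heq] at hss
      exact ssubset_irrefl _ hss
    have hle := Finset.card_le_card hmono
    have : (Sset T e').card ≤ (Finset.univ.filter (fun r => Rf r ⊂ Sset T e')).card + 1 := hcore
    push_cast
    omega
  -- assemble: total weight of the units
  have hHf : ∀ r : Fin n, hEdge T (un r) = T.d - ∑ e' ∈ T.G.edgeFinset.filter
      (fun e' => Sset T (un r) ⊆ Sset T e' ∧ e' ≠ un r), T.weight e' :=
    fun r => h_formula T (hunE r)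
  have hsum1 : ∑ r, hEdge T (un r) = (n : ℤ) * T.d - ∑ r : Fin n, ∑ e' ∈ T.G.edgeFinset.filter
      (fun e' => Sset T (un r) ⊆ Sset T e' ∧ e' ≠ un r), T.weight e' := by
    rw [Finset.sum_congr rfl (fun r _ => hHf r), Finset.sum_sub_distrib, Finset.sum_const,
      Finset.card_univ, Fintype.card_fin, nsmul_eq_mul]
  have hswap : ∑ r : Fin n, ∑ e' ∈ T.G.edgeFinset.filter
        (fun e' => Sset T (un r) ⊆ Sset T e' ∧ e' ≠ un r), T.weight e'
      = ∑ e' ∈ T.G.edgeFinset, T.weight e' *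
          ((Finset.univ.filter (fun r => Sset T (un r) ⊆ Sset T e' ∧ e' ≠ un r)).card : ℤ) := by
    rw [Finset.sum_congr rfl (fun r (_ : r ∈ Finset.univ) =>
      Finset.sum_filter (fun e' => Sset T (un r) ⊆ Sset T e' ∧ e' ≠ un r) T.weight)]
    rw [Finset.sum_comm]
    refine Finset.sum_congr rfl (fun e' he' => ?_)
    rw [← Finset.sum_filter, Finset.sum_const, nsmul_eq_mul, mul_comm]
  have htot := total_weight_mul_card T
  -- final chain
  have hfinal : ∑ r, hEdge T (un r) ≤ ∑ e ∈ T.G.edgeFinset, T.weight e := by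
    rw [hsum1, hswap, ← htot]
    rw [← Finset.sum_sub_distrib]
    refine Finset.sum_le_sum (fun e' he' => ?_)
    have hw := T.weight_nonneg e' ((SimpleGraph.mem_edgeFinset).mp he')
    have hc := hcnt e' he'
    have : T.weight e' * ((Sset T e').card : ℤ)
        - T.weight e' * ((Finset.univ.filter
            (fun r => Sset T (un r) ⊆ Sset T e' ∧ e' ≠ un r)).card : ℤ)
        = T.weight e' * (((Sset T e').card : ℤ) - ((Finset.univ.filter
            (fun r => Sset T (un r) ⊆ Sset T e' ∧ e' ≠ un r)).card : ℤ)) := by ring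
    rw [this]
    calc T.weight e' * (((Sset T e').card : ℤ) - _) ≤ T.weight e' * 1 := by
          refine mul_le_mul_of_nonneg_left ?_ hw
          omega
      _ = T.weight e' := mul_one _
  rw [hK]
  omega

end UT

/-- for `n ≥ 4` and a `d`-equidistant ultrametric `n`-tree `T` with
nonnegative integer edge weights and total weight `D`, for every assignment of
complex values to the `a_j(e)`, either `det M = 0` or the `t`-adic valuation of
`det M` is at least `-D`. -/
theorem stmt1 (n : ℕ) (hn : 4 ≤ n) (T : UltraTree n)
    (D : ℤ) (hD : D = ∑ e ∈ T.G.edgeFinset, T.weight e)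
    (a : ℕ → Sym2 T.V → ℂ) :
    (Mmat T a).det = 0 ∨ -D ≤ (Mmat T a).det.order := by
  classical
  subst hD
  rw [UT.det_expand T a]
  apply UT.sum_order_bound
  intro ε hε
  by_cases hz : ((∏ r, UT.zCoef T a r (ε r)) *
      (Matrix.of fun r c => UT.Bent T r (ε r) c).det) = 0
  · left; rw [hz]; exact HahnSeries.single_eq_zero
  · right
    rw [HahnSeries.order_single hz]
    exact UT.eps_bound T hn ε hε (fun h => hz (by rw [h, mul_zero]))
end

section
/- Let T be a rooted binary tree with n ≥ 2 leaves, let v_1, v_2, …, v_{n−1} be an enumeration of its internal vertices such that v_i ≤_T v_j implies j ≤ i (so v_{n−1} is the root), and let α be an injective map from the internal vertices to the leaves with v_i ≤_T α(v_i) for all i; write a_i = α(v_i). Then for every i with 1 ≤ i ≤ n−1 there exists a unique leaf b_i such that v_i ≤_T b_i and b_i ∉ {a_1, a_2, …, a_i}. -/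
open SimpleGraph

/-- A rooted binary tree with `n` leaves labeled by `Fin n`: a finite tree with a
distinguished root of degree 2, all of whose non-root vertices have degree 3
(internal vertices) or degree 1 (leaves), whose leaves are labeled bijectively
by `Fin n`. -/
structure RootedBinaryTree (n : ℕ) where
  V : Type
  [fintypeV : Fintype V]
  [decEqV : DecidableEq V]
  G : SimpleGraph V
  [decAdj : DecidableRel G.Adj]
  isTree : G.IsTree
  root : V
  root_deg : G.degree root = 2
  deg_of_ne_root : ∀ v : V, v ≠ root → G.degree v = 3 ∨ G.degree v = 1
  leaf : Fin n → V
  leaf_inj : Function.Injective leaf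
  leaf_deg : ∀ i : Fin n, G.degree (leaf i) = 1
  leaf_surj : ∀ v : V, G.degree v = 1 → ∃ i : Fin n, leaf i = v

attribute [instance] RootedBinaryTree.fintypeV RootedBinaryTree.decEqV
  RootedBinaryTree.decAdj

/-- The tree order on `T`: `v ≤_T w` iff `v` lies on the (unique) path from the
root to `w`. -/
def treeLE {n : ℕ} (T : RootedBinaryTree n) (v w : T.V) : Prop :=
  ∀ p : T.G.Walk T.root w, p.IsPath → v ∈ p.support

/-- A vertex is internal iff it is the root or has degree 3. -/
def isInternal {n : ℕ} (T : RootedBinaryTree n) (v : T.V) : Prop :=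
  v = T.root ∨ T.G.degree v = 3

namespace Stmt3Aux

open SimpleGraph Walk

variable {n : ℕ} (T : RootedBinaryTree n)

noncomputable def rpath (w : T.V) : T.G.Walk T.root w :=
  (T.isTree.existsUnique_path T.root w).choose

lemma rpath_isPath (w : T.V) : (rpath T w).IsPath :=
  (T.isTree.existsUnique_path T.root w).choose_spec.1

lemma rpath_eq {w : T.V} (p : T.G.Walk T.root w) (hp : p.IsPath) : p = rpath T w :=
  (T.isTree.existsUnique_path T.root w).choose_spec.2 p hp

lemma treeLE_iff {u w : T.V} : treeLE T u w ↔ u ∈ (rpath T w).support := by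
  constructor
  · intro h; exact h _ (rpath_isPath T w)
  · intro h p hp; rwa [rpath_eq T p hp]

lemma takeUntil_rpath {u w : T.V} (h : u ∈ (rpath T w).support) :
    (rpath T w).takeUntil u h = rpath T u :=
  rpath_eq T _ ((rpath_isPath T w).takeUntil h)

lemma treeLE_refl (u : T.V) : treeLE T u u := fun p _ => p.end_mem_support

lemma root_treeLE (u : T.V) : treeLE T T.root u := fun p _ => p.start_mem_support

lemma rpath_root : rpath T T.root = Walk.nil := (rpath_eq T Walk.nil IsPath.nil).symm

lemma eq_root_of_treeLE_root {u : T.V} (h : treeLE T u T.root) : u = T.root := by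
  have := treeLE_iff T |>.mp h
  rw [rpath_root] at this
  simpa using this

lemma treeLE_trans {u v w : T.V} (h1 : treeLE T u v) (h2 : treeLE T v w) : treeLE T u w := by
  rw [treeLE_iff] at h1 h2 ⊢
  have h1' : u ∈ ((rpath T w).takeUntil v h2).support := by
    rw [takeUntil_rpath T h2]; exact h1
  exact support_takeUntil_subset _ h2 h1'

lemma disjoint_take_drop {w u : T.V} (h : u ∈ (rpath T w).support) :
    List.Disjoint ((rpath T w).takeUntil u h).support
      ((rpath T w).dropUntil u h).support.tail := by
  have hnd : ((rpath T w).support).Nodup := (rpath_isPath T w).support_nodup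
  rw [← (rpath T w).take_spec h, support_append] at hnd
  exact List.disjoint_of_nodup_append hnd

lemma treeLE_antisymm {u w : T.V} (h1 : treeLE T u w) (h2 : treeLE T w u) : u = w := by
  rw [treeLE_iff] at h1 h2
  by_contra hne
  rw [← takeUntil_rpath T h1] at h2
  have hw : w ∈ ((rpath T w).dropUntil u h1).support := Walk.end_mem_support _
  rw [Walk.support_eq_cons] at hw
  rcases List.mem_cons.mp hw with h | h
  · exact hne h.symm
  · exact disjoint_take_drop T h1 h2 h

lemma treeLE_total_of_mem {x u₁ u₂ : T.V} (h1 : treeLE T u₁ x) (h2 : treeLE T u₂ x) :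
    treeLE T u₁ u₂ ∨ treeLE T u₂ u₁ := by
  rw [treeLE_iff] at h1 h2
  by_cases hc : u₂ ∈ ((rpath T x).takeUntil u₁ h1).support
  · right; rw [treeLE_iff, ← takeUntil_rpath T h1]; exact hc
  · left
    have hd : u₂ ∈ ((rpath T x).dropUntil u₁ h1).support := by
      rw [← (rpath T x).take_spec h1, mem_support_append_iff] at h2
      tauto
    set q := (rpath T x).takeUntil u₁ h1 with hq
    set d := (rpath T x).dropUntil u₁ h1 with hdq
    have hqp : q.IsPath := (rpath_isPath T x).takeUntil h1
    have hdp : d.IsPath := (rpath_isPath T x).dropUntil h1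
    set r := d.takeUntil u₂ hd with hr
    have hrp : r.IsPath := hdp.takeUntil hd
    have hpath : (q.append r).IsPath := by
      rw [isPath_def, support_append]
      refine List.Nodup.append hqp.support_nodup (hrp.support_nodup.tail) ?_
      intro z hzq hzr
      have hzr' : z ∈ d.support.tail := by
        have hzrs : z ∈ r.support := List.mem_of_mem_tail hzr
        have hzne : z ≠ u₁ := by
          intro h
          have hnd := hrp.support_nodup
          rw [Walk.support_eq_cons r] at hnd
          exact (List.nodup_cons.mp hnd).1 (h ▸ hzr)
        have := support_takeUntil_subset d hd hzrs
        rw [Walk.support_eq_cons d] at this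
        rcases List.mem_cons.mp this with h | h
        · exact absurd h hzne
        · exact h
      exact disjoint_take_drop T h1 hzq hzr'
    have := rpath_eq T (q.append r) hpath
    rw [treeLE_iff, ← this, mem_support_append_iff]
    left
    exact q.end_mem_support


lemma support_getLast? {x : T.V} (p : T.G.Walk T.root x) :
    p.support.getLast? = some x := by
  rw [List.getLast?_eq_getLast (Walk.support_ne_nil _), Walk.getLast_support]

lemma adj_le_or_parent {u y : T.V} (h : T.G.Adj u y) :
    treeLE T u y ∨ rpath T u = (rpath T y).concat h.symm := by
  by_cases hu : u ∈ (rpath T y).support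
  · left; exact (treeLE_iff T).mpr hu
  · right
    refine ((rpath_eq T _ ?_)).symm
    rw [isPath_def, support_concat]
    refine List.Nodup.append (rpath_isPath T y).support_nodup (List.nodup_singleton u) ?_
    intro z hz hz'
    rw [List.mem_singleton] at hz'
    exact hu (hz' ▸ hz)

lemma concat_support {u y : T.V} (h : T.G.Adj y u)
    (e : rpath T u = (rpath T y).concat h) :
    (rpath T u).support = (rpath T y).support ++ [u] := by
  rw [e, support_concat]

lemma parent_unique {u y z : T.V} (hy : T.G.Adj y u) (hz : T.G.Adj z u)
    (e1 : rpath T u = (rpath T y).concat hy) (e2 : rpath T u = (rpath T z).concat hz) :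
    y = z := by
  have h1 := concat_support T hy e1
  have h2 := concat_support T hz e2
  have hl : (rpath T y).support = (rpath T z).support := by
    have := h1.symm.trans h2
    exact List.append_inj_left' this rfl
  have := support_getLast? T (rpath T y)
  rw [hl, support_getLast? T (rpath T z)] at this
  exact (Option.some_injective _ this).symm

lemma not_treeLE_parent {u y : T.V} (h : T.G.Adj y u)
    (e : rpath T u = (rpath T y).concat h) : ¬ treeLE T u y := by
  intro hle
  have hmem := (treeLE_iff T).mp hle
  have hnd := (rpath_isPath T u).support_nodup
  rw [concat_support T h e] at hnd
  exact (List.disjoint_of_nodup_append hnd) hmem (List.mem_singleton_self u)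

lemma exists_parent {w : T.V} (hwr : w ≠ T.root) :
    ∃ (y : T.V) (h : T.G.Adj y w), rpath T w = (rpath T y).concat h := by
  have hnn : ¬ (rpath T w).reverse.Nil := by
    rw [Walk.nil_iff_length_eq, Walk.length_reverse]
    intro h0
    have hN : (rpath T w).Nil := Walk.nil_iff_length_eq.mpr h0
    rw [Walk.nil_iff_support_eq] at hN
    have hend := Walk.end_mem_support (rpath T w)
    rw [hN] at hend
    exact hwr (by simpa using hend)
  rw [Walk.not_nil_iff] at hnn
  obtain ⟨u, h, q, hq⟩ := hnn
  refine ⟨u, (h.symm : T.G.Adj u w), ?_⟩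
  have : rpath T w = ((rpath T w).reverse).reverse := by rw [Walk.reverse_reverse]
  rw [this, hq, Walk.reverse_cons]
  congr 1
  have hqpath : q.reverse.IsPath := by
    have : (rpath T w).reverse.IsPath := (rpath_isPath T w).reverse
    rw [hq] at this
    exact (this.of_cons).reverse
  exact (rpath_eq T q.reverse hqpath)

/-- Every neighbor `z` of a vertex `u` strictly below `w` is again below `w`. -/
lemma neighbor_below {w u z : T.V} (hu : treeLE T w u) (hne : u ≠ w)
    (h : T.G.Adj u z) : treeLE T w z := by
  rcases adj_le_or_parent T h with hle | e
  · exact treeLE_trans T hu hle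
  · have hmem := (treeLE_iff T).mp hu
    rw [concat_support T h.symm e] at hmem
    rcases List.mem_append.mp hmem with hm | hm
    · exact (treeLE_iff T).mpr hm
    · exact absurd (List.mem_singleton.mp hm).symm hne

attribute [local instance 10] Classical.propDecidable

noncomputable def below (w : T.V) : Finset T.V :=
  Finset.univ.filter (fun u => treeLE T w u)

lemma mem_below {w u : T.V} : u ∈ below T w ↔ treeLE T w u := by
  simp [below]

def belowSet (w : T.V) : Set T.V := {u | u ∈ below T w}

noncomputable instance (w : T.V) : DecidablePred (· ∈ belowSet T w) :=
  fun u => show Decidable (u ∈ below T w) from inferInstance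

noncomputable instance (w : T.V) : DecidableRel (T.G.induce (belowSet T w)).Adj :=
  fun a b => show Decidable (T.G.Adj a b) from inferInstance

/-- Lift a walk whose support lies in `s` to the induced graph. -/
def liftWalk {s : Set T.V} : ∀ {x y : T.V} (p : T.G.Walk x y) (hx : x ∈ s) (hy : y ∈ s),
    (∀ z ∈ p.support, z ∈ s) → (T.G.induce s).Walk ⟨x, hx⟩ ⟨y, hy⟩
  | _, _, Walk.nil, _, _, _ => Walk.nil
  | _, _, Walk.cons a p, hx, hy, h =>
      Walk.cons (by simpa using a)
        (liftWalk p (h _ (by simp)) hy (fun z hz => h z (by simp [hz])))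

lemma drop_support_below {w x : T.V} (hx : treeLE T w x) {z : T.V}
    (hz : z ∈ ((rpath T x).dropUntil w ((treeLE_iff T).mp hx)).support) : treeLE T w z := by
  have hw := (treeLE_iff T).mp hx
  have hzx : treeLE T z x :=
    (treeLE_iff T).mpr (support_dropUntil_subset _ hw hz)
  rcases treeLE_total_of_mem T hzx ((treeLE_iff T).mpr hw) with h | h
  · -- z ≤ w : then z ∈ takeUntil support; combined with nodup, z = w
    have hzt : z ∈ ((rpath T x).takeUntil w hw).support := by
      rw [takeUntil_rpath T hw]
      exact (treeLE_iff T).mp h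
    rw [Walk.support_eq_cons] at hz
    rcases List.mem_cons.mp hz with h' | h'
    · exact h' ▸ treeLE_refl T w
    · exact absurd h' (fun hh => disjoint_take_drop T hw hzt hh)
  · exact h

lemma below_connected (w : T.V) : (T.G.induce (belowSet T w)).Connected := by
  have hwmem : w ∈ belowSet T w := by
    show w ∈ below T w; exact (mem_below T).mpr (treeLE_refl T w)
  have reach : ∀ x : (belowSet T w), (T.G.induce (belowSet T w)).Reachable ⟨w, hwmem⟩ x := by
    rintro ⟨x, hx⟩
    have hx' : treeLE T w x := (mem_below T).mp hx
    have hw := (treeLE_iff T).mp hx'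
    exact ⟨liftWalk T ((rpath T x).dropUntil w hw) hwmem hx
      (fun z hz => show z ∈ below T w from (mem_below T).mpr (drop_support_below T hx' hz))⟩
  haveI : Nonempty (belowSet T w) := ⟨⟨w, hwmem⟩⟩
  exact ⟨fun a b => (reach a).symm.trans (reach b)⟩

lemma below_acyclic (w : T.V) : (T.G.induce (belowSet T w)).IsAcyclic := by
  intro x c hc
  let f : T.G.induce (belowSet T w) →g T.G := ⟨Subtype.val, fun {a b} hab => hab⟩
  have hinj : Function.Injective f := by
    intro a b h
    exact Subtype.val_injective h
  exact T.isTree.IsAcyclic _ ((Walk.map_isCycle_iff_of_injective hinj).mpr hc)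

lemma below_isTree (w : T.V) : (T.G.induce (belowSet T w)).IsTree :=
  ⟨below_connected T w, below_acyclic T w⟩

lemma induce_degree {w : T.V} (u : T.V) (hu : u ∈ belowSet T w) :
    (T.G.induce (belowSet T w)).degree ⟨u, hu⟩
      = ((T.G.neighborFinset u).filter (· ∈ belowSet T w)).card := by
  show ((T.G.induce (belowSet T w)).neighborFinset ⟨u, hu⟩).card = _
  refine Finset.card_bij (fun (a : (belowSet T w)) _ => (a : T.V)) ?_ ?_ ?_
  · rintro ⟨z, hz⟩ ha
    rw [SimpleGraph.mem_neighborFinset] at ha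
    simp only [Finset.mem_filter, SimpleGraph.mem_neighborFinset]
    exact ⟨by simpa using ha, hz⟩
  · rintro ⟨z1, _⟩ _ ⟨z2, _⟩ _ hzz
    simpa using hzz
  · intro z hz
    simp only [Finset.mem_filter, SimpleGraph.mem_neighborFinset] at hz
    refine ⟨⟨z, hz.2⟩, ?_, rfl⟩
    rw [SimpleGraph.mem_neighborFinset]
    simpa using hz.1

lemma sum_d (w : T.V) (hw : isInternal T w) :
    ∑ u ∈ below T w, ((T.G.neighborFinset u).filter (· ∈ belowSet T w)).card
      = 2 * ((below T w).card - 1) := by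
  have htree := below_isTree T w
  have hcard := htree.card_edgeFinset
  have hsum := SimpleGraph.sum_degrees_eq_twice_card_edges (T.G.induce (belowSet T w))
  have hc : Fintype.card (belowSet T w) = (below T w).card := by
    rw [← Fintype.card_coe (below T w)]
    exact Fintype.card_congr (Equiv.subtypeEquivRight
      (fun x => (Iff.rfl : x ∈ belowSet T w ↔ x ∈ below T w)))
  have h1 : ∑ u ∈ below T w, ((T.G.neighborFinset u).filter (· ∈ belowSet T w)).card
      = ∑ x : (belowSet T w), (T.G.induce (belowSet T w)).degree x := by
    rw [Finset.sum_subtype (below T w) (fun x => Iff.rfl)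
      (fun u => ((T.G.neighborFinset u).filter (· ∈ belowSet T w)).card)]
    exact Finset.sum_congr rfl (fun x _ => (induce_degree T x x.2).symm)
  rw [h1, hsum]
  omega


lemma d_eq_degree {w u : T.V} (hu : u ∈ below T w) (hne : u ≠ w) :
    ((T.G.neighborFinset u).filter (· ∈ belowSet T w)).card = T.G.degree u := by
  rw [Finset.filter_eq_self.mpr, SimpleGraph.card_neighborFinset_eq_degree]
  intro z hz
  rw [SimpleGraph.mem_neighborFinset] at hz
  show z ∈ below T w
  exact (mem_below T).mpr (neighbor_below T ((mem_below T).mp hu) hne hz)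

lemma ne_root_of_below {w u : T.V} (hu : u ∈ below T w) (hne : u ≠ w) : u ≠ T.root := by
  intro h
  subst h
  exact hne (eq_root_of_treeLE_root T ((mem_below T).mp hu)).symm

lemma deg_of_below {w u : T.V} (hu : u ∈ below T w) (hne : u ≠ w) :
    T.G.degree u = 3 ∨ T.G.degree u = 1 :=
  T.deg_of_ne_root u (ne_root_of_below T hu hne)

lemma deg_w {w : T.V} (hw : isInternal T w) : T.G.degree w = 2 ∨ T.G.degree w = 3 := by
  rcases hw with h | h
  · left; rw [h]; exact T.root_deg
  · right; exact h

lemma d_w (w : T.V) (hw : isInternal T w) :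
    ((T.G.neighborFinset w).filter (· ∈ belowSet T w)).card = 2 := by
  by_cases hroot : w = T.root
  · rw [Finset.filter_eq_self.mpr, SimpleGraph.card_neighborFinset_eq_degree]
    · rw [hroot]; exact T.root_deg
    · intro z hz
      show z ∈ below T w
      rw [mem_below, hroot]
      exact root_treeLE T z
  · -- w has a unique parent, which is its only neighbor not below w
    obtain ⟨y, hy, e⟩ := exists_parent T hroot
    have hdeg3 : T.G.degree w = 3 := by
      rcases hw with h | h
      · exact absurd h hroot
      · exact h
    have hkey : (T.G.neighborFinset w).filter (fun z => ¬ z ∈ belowSet T w) = {y} := by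
      ext z
      simp only [Finset.mem_filter, SimpleGraph.mem_neighborFinset, Finset.mem_singleton]
      constructor
      · rintro ⟨hadj, hnb⟩
        have hnle : ¬ treeLE T w z := fun hle => hnb ((mem_below T).mpr hle)
        rcases adj_le_or_parent T hadj with h | h
        · exact absurd h hnle
        · exact (parent_unique T hadj.symm hy h e).symm ▸ rfl
      · rintro rfl
        refine ⟨hy.symm, ?_⟩
        intro hb
        exact not_treeLE_parent T hy e ((mem_below T).mp hb)
    have := Finset.card_filter_add_card_filter_not
      (s := T.G.neighborFinset w) (p := fun z => z ∈ belowSet T w)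
    rw [hkey] at this
    simp only [Finset.card_singleton, SimpleGraph.card_neighborFinset_eq_degree, hdeg3] at this
    omega

lemma counts (w : T.V) (hw : isInternal T w) :
    (((below T w).erase w).filter (fun u => T.G.degree u = 1)).card
      = (((below T w).erase w).filter (fun u => ¬ T.G.degree u = 1)).card + 2 := by
  have hwB : w ∈ below T w := (mem_below T).mpr (treeLE_refl T w)
  set B := below T w with hB
  set E := B.erase w with hE
  set L := E.filter (fun u => T.G.degree u = 1) with hL
  set I := E.filter (fun u => ¬ T.G.degree u = 1) with hI
  have hsum := sum_d T w hw
  rw [← hB] at hsum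
  have hsplit : ∑ u ∈ B, ((T.G.neighborFinset u).filter (· ∈ belowSet T w)).card
      = 2 + ∑ u ∈ E, ((T.G.neighborFinset u).filter (· ∈ belowSet T w)).card := by
    rw [← Finset.add_sum_erase B _ hwB, d_w T w hw]
  have hE_deg : ∀ u ∈ E, ((T.G.neighborFinset u).filter (· ∈ belowSet T w)).card
      = T.G.degree u := by
    intro u hu
    exact d_eq_degree T (Finset.mem_of_mem_erase hu) (Finset.ne_of_mem_erase hu)
  have hsum2 : ∑ u ∈ E, ((T.G.neighborFinset u).filter (· ∈ belowSet T w)).card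
      = ∑ u ∈ E, T.G.degree u := Finset.sum_congr rfl hE_deg
  have hsplit2 : ∑ u ∈ E, T.G.degree u = ∑ u ∈ L, T.G.degree u + ∑ u ∈ I, T.G.degree u :=
    (Finset.sum_filter_add_sum_filter_not E _ _).symm
  have hLsum : ∑ u ∈ L, T.G.degree u = L.card := by
    rw [Finset.sum_congr rfl (fun u hu => (Finset.mem_filter.mp hu).2)]
    simp
    rfl
  have hIsum : ∑ u ∈ I, T.G.degree u = 3 * I.card := by
    rw [Finset.sum_congr rfl (fun u hu => ?_), Finset.sum_const, smul_eq_mul, mul_comm]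
    have hu' := Finset.mem_filter.mp hu
    rcases deg_of_below T (Finset.mem_of_mem_erase hu'.1) (Finset.ne_of_mem_erase hu'.1) with h | h
    · exact h
    · exact absurd h hu'.2
  have hcardE : L.card + I.card = E.card := Finset.card_filter_add_card_filter_not _
  have hcardB : E.card + 1 = B.card := Finset.card_erase_add_one hwB
  rw [hsplit, hsum2, hsplit2, hLsum, hIsum] at hsum
  omega

lemma count_main (w : T.V) (hw : isInternal T w) :
    (Finset.univ.filter (fun b : Fin n => treeLE T w (T.leaf b))).card
      = (Finset.univ.filter (fun u : T.V => isInternal T u ∧ treeLE T w u)).card + 1 := by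
  have hwB : w ∈ below T w := (mem_below T).mpr (treeLE_refl T w)
  set B := below T w with hB
  set E := B.erase w with hE
  set L := E.filter (fun u => T.G.degree u = 1) with hL
  set I := E.filter (fun u => ¬ T.G.degree u = 1) with hI
  have hdw : T.G.degree w ≠ 1 := by rcases deg_w T hw with h | h <;> omega
  -- leaves bijection
  have h1 : (Finset.univ.filter (fun b : Fin n => treeLE T w (T.leaf b))).card = L.card := by
    refine Finset.card_bij (fun b _ => T.leaf b) ?_ ?_ ?_
    · intro b hb
      rw [Finset.mem_filter] at hb
      rw [hL, Finset.mem_filter, hE, Finset.mem_erase]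
      refine ⟨⟨?_, (mem_below T).mpr hb.2⟩, T.leaf_deg b⟩
      intro hleq
      exact hdw (hleq ▸ T.leaf_deg b)
    · intro b1 _ b2 _ hbb
      exact T.leaf_inj hbb
    · intro u hu
      rw [hL, Finset.mem_filter] at hu
      obtain ⟨b, hb⟩ := T.leaf_surj u hu.2
      refine ⟨b, ?_, hb⟩
      rw [Finset.mem_filter, hb]
      exact ⟨Finset.mem_univ _, (mem_below T).mp (Finset.mem_of_mem_erase hu.1)⟩
  -- internal vertices = I ∪ {w}
  have h2 : Finset.univ.filter (fun u : T.V => isInternal T u ∧ treeLE T w u)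
      = insert w I := by
    ext u
    simp only [Finset.mem_filter, Finset.mem_univ, true_and, Finset.mem_insert, hI, hE,
      Finset.mem_erase]
    constructor
    · rintro ⟨hint, hle⟩
      by_cases huw : u = w
      · exact Or.inl huw
      · right
        have hub : u ∈ B := (mem_below T).mpr hle
        refine ⟨⟨huw, hub⟩, ?_⟩
        rcases hint with h | h
        · exact absurd h (ne_root_of_below T hub huw)
        · omega
    · rintro (h | ⟨⟨huw, hub⟩, hdeg⟩)
      · rw [h]; exact ⟨hw, treeLE_refl T w⟩
      · refine ⟨?_, (mem_below T).mp hub⟩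
        rcases T.deg_of_ne_root u (ne_root_of_below T hub huw) with h | h
        · exact Or.inr h
        · exact absurd h hdeg
  have hwI : w ∉ I := by
    rw [hI, hE]
    simp
  rw [h1, h2, Finset.card_insert_of_notMem hwI]
  have hcts := counts T w hw
  rw [← hB, ← hE, ← hL, ← hI] at hcts
  omega

end Stmt3Aux

/-- given an enumeration `v 0, …, v (n-2)` of the internal vertices
(`v i ≤_T v j` implying `j ≤ i`) and an injective map `α` from internal vertices to
leaves with `v i ≤_T a i := α (v i)`, for every `i` there is a unique leaf `b`
with `v i ≤_T b` and `b ∉ {a 0, …, a i}`. -/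
theorem stmt3 (n : ℕ) (hn : 2 ≤ n) (T : RootedBinaryTree n)
    (v : Fin (n - 1) → T.V)
    (hv_int : ∀ i, isInternal T (v i))
    (hv_inj : Function.Injective v)
    (hv_surj : ∀ w : T.V, isInternal T w → ∃ i, v i = w)
    (hv_order : ∀ i j : Fin (n - 1), treeLE T (v i) (v j) → j ≤ i)
    (a : Fin (n - 1) → Fin n)
    (ha_inj : Function.Injective a)
    (ha_below : ∀ i, treeLE T (v i) (T.leaf (a i))) :
    ∀ i : Fin (n - 1), ∃! b : Fin n,
      treeLE T (v i) (T.leaf b) ∧ ∀ j : Fin (n - 1), j ≤ i → b ≠ a j := by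
  classical
  intro i
  set w := v i with hwdef
  have hw : isInternal T w := hv_int i
  set Lf := Finset.univ.filter (fun b : Fin n => treeLE T w (T.leaf b)) with hLf
  set K := Finset.univ.filter (fun u : T.V => isInternal T u ∧ treeLE T w u) with hK
  set J := Finset.univ.filter (fun j : Fin (n-1) => treeLE T w (v j)) with hJ
  have hcount : Lf.card = K.card + 1 := Stmt3Aux.count_main T w hw
  have hKJ : K.card = J.card := by
    refine (Finset.card_bij (fun (j : Fin (n-1)) (_ : j ∈ J) => v j) ?_ ?_ ?_).symm
    · intro j hj
      rw [hK, Finset.mem_filter]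
      exact ⟨Finset.mem_univ _, hv_int j, (Finset.mem_filter.mp hj).2⟩
    · intro j1 _ j2 _ h
      exact hv_inj h
    · intro u hu
      rw [hK, Finset.mem_filter] at hu
      obtain ⟨j, hj⟩ := hv_surj u hu.2.1
      refine ⟨j, ?_, hj⟩
      rw [hJ, Finset.mem_filter, hj]
      exact ⟨Finset.mem_univ _, hu.2.2⟩
  have himg : J.image a ⊆ Lf := by
    intro b hb
    obtain ⟨j, hj, hjb⟩ := Finset.mem_image.mp hb
    rw [hLf, Finset.mem_filter, ← hjb]
    exact ⟨Finset.mem_univ _,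
      Stmt3Aux.treeLE_trans T ((Finset.mem_filter.mp hj).2) (ha_below j)⟩
  have hDcard : (Lf \ J.image a).card = 1 := by
    rw [Finset.card_sdiff_of_subset himg, Finset.card_image_of_injective _ ha_inj, hcount, hKJ]
    omega
  obtain ⟨b, hb⟩ := Finset.card_eq_one.mp hDcard
  have hmemb : ∀ b' : Fin n,
      (treeLE T w (T.leaf b') ∧ ∀ j : Fin (n-1), j ≤ i → b' ≠ a j) ↔ b' ∈ Lf \ J.image a := by
    intro b'
    rw [Finset.mem_sdiff, hLf, Finset.mem_filter]
    constructor
    · rintro ⟨h1, h2⟩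
      refine ⟨⟨Finset.mem_univ _, h1⟩, ?_⟩
      intro hmem
      obtain ⟨j, hj, hjb⟩ := Finset.mem_image.mp hmem
      have hjle : treeLE T w (v j) := (Finset.mem_filter.mp hj).2
      exact h2 j (hv_order i j hjle) hjb.symm
    · rintro ⟨⟨_, h1⟩, h2⟩
      refine ⟨h1, ?_⟩
      intro j hj hbe
      by_cases hjJ : treeLE T w (v j)
      · exact h2 (Finset.mem_image.mpr
          ⟨j, Finset.mem_filter.mpr ⟨Finset.mem_univ _, hjJ⟩, hbe.symm⟩)
      · have hia : treeLE T w (T.leaf (a j)) := hbe ▸ h1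
        have hja : treeLE T (v j) (T.leaf (a j)) := ha_below j
        rcases Stmt3Aux.treeLE_total_of_mem T hia hja with h | h
        · exact hjJ h
        · have hij : i ≤ j := hv_order j i h
          have hji : j = i := le_antisymm hj hij
          refine hjJ ?_
          rw [hji, ← hwdef]
          exact Stmt3Aux.treeLE_refl T w
  refine ⟨b, ?_, ?_⟩
  · exact (hmemb b).mpr (hb ▸ Finset.mem_singleton_self b)
  · intro b' hb'
    have hmem := (hmemb b').mp hb'
    rw [hb] at hmem
    exact Finset.mem_singleton.mp hmem
end
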